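/- Let X be n×k of rank k, Z be n×(n−k) with X^T Z = 0 and rank n−k, Ω n×n positive definite, and ρ > 0. Set K₁ = ρ (X^T Ω^{-1} X)^{-1} and K₂ = ρ (X^T X)^{-1}. If Ω = X Γ X^T + Z Δ Z^T for some positive definite Γ and Δ (Rao's covariance structure), then K₁ X^T (Ω + X K₁ X^T)^{-1} = K₂ X^T (I_n + X K₂ X^T)^{-1}; that is, the two typical shrinkage (Bayes linear) estimators coincide. -/

import Mathlib

open Matrix

lemma aux_posDef_transpose_mul_self {n k : ℕ} (X : Matrix (Fin n) (Fin k) ℝ)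
    (hX : X.rank = k) : (Xᵀ * X).PosDef := by
  have hinj : Function.Injective X.mulVecLin := by
    rw [← LinearMap.ker_eq_bot, ← Submodule.finrank_eq_zero]
    have h2 := X.mulVecLin.finrank_range_add_finrank_ker
    rw [Matrix.rank] at hX
    rw [hX] at h2
    simpa using h2
  rw [Matrix.posDef_iff_dotProduct_mulVec]
  constructor
  · simpa using X.isHermitian_conjTranspose_mul_self
  · intro x hx
    have hXx : X *ᵥ x ≠ 0 := by
      intro h
      apply hx
      apply hinj
      simpa using h
    have : star x ⬝ᵥ (Xᵀ * X) *ᵥ x = (X *ᵥ x) ⬝ᵥ (X *ᵥ x) := by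
      rw [← Matrix.mulVec_mulVec, Matrix.dotProduct_mulVec, Matrix.vecMul_transpose]
      simp
    rw [this]
    have hpos : 0 ≤ (X *ᵥ x) ⬝ᵥ (X *ᵥ x) := by
      rw [dotProduct]
      exact Finset.sum_nonneg fun i _ => mul_self_nonneg _
    exact hpos.lt_of_ne (Ne.symm fun h => hXx (dotProduct_self_eq_zero.mp h))

lemma aux_smul_posSemidef {k : ℕ} {M : Matrix (Fin k) (Fin k) ℝ} (hM : M.PosSemidef)
    {c : ℝ} (hc : 0 ≤ c) : (c • M).PosSemidef := by
  rw [Matrix.posSemidef_iff_dotProduct_mulVec] at hM ⊢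
  constructor
  · show (c • M)ᴴ = c • M
    rw [Matrix.conjTranspose_smul, hM.1.eq]
    simp
  · intro x
    rw [Matrix.smul_mulVec, dotProduct_smul]
    exact mul_nonneg hc (hM.2 x)

lemma aux_key {n k m : ℕ} (X : Matrix (Fin n) (Fin k) ℝ) (Z : Matrix (Fin n) (Fin m) ℝ)
    (hZX : Zᵀ * X = 0) (G : Matrix (Fin k) (Fin k) ℝ) (Δ : Matrix (Fin m) (Fin m) ℝ)
    (hG : IsUnit G.det) (hXX : IsUnit (Xᵀ * X).det) :
    (X * G * Xᵀ + Z * Δ * Zᵀ) * (X * ((Xᵀ * X)⁻¹ * G⁻¹)) = X := by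
  have hz : Zᵀ * (X * ((Xᵀ * X)⁻¹ * G⁻¹)) = 0 := by
    rw [← Matrix.mul_assoc, hZX, Matrix.zero_mul]
  have hx : Xᵀ * (X * ((Xᵀ * X)⁻¹ * G⁻¹)) = G⁻¹ := by
    rw [← Matrix.mul_assoc Xᵀ X, ← Matrix.mul_assoc (Xᵀ * X),
      Matrix.mul_nonsing_inv _ hXX, Matrix.one_mul]
  rw [Matrix.add_mul, Matrix.mul_assoc (X * G) Xᵀ, hx, Matrix.mul_assoc (Z * Δ) Zᵀ, hz,
    Matrix.mul_zero, add_zero, Matrix.mul_assoc X G, Matrix.mul_nonsing_inv _ hG,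
    Matrix.mul_one]

theorem stmt_13 {n k : ℕ} (hnk : k < n)
    (X : Matrix (Fin n) (Fin k) ℝ) (hX : X.rank = k)
    (Z : Matrix (Fin n) (Fin (n - k)) ℝ) (hXZ : Xᵀ * Z = 0) (hZ : Z.rank = n - k)
    (Ω : Matrix (Fin n) (Fin n) ℝ) (hΩ : Ω.PosDef)
    (ρ : ℝ) (hρ : 0 < ρ)
    (K₁ K₂ : Matrix (Fin k) (Fin k) ℝ)
    (hK₁ : K₁ = ρ • (Xᵀ * Ω⁻¹ * X)⁻¹) (hK₂ : K₂ = ρ • (Xᵀ * X)⁻¹)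
    (Γ : Matrix (Fin k) (Fin k) ℝ) (hΓ : Γ.PosDef)
    (Δ : Matrix (Fin (n - k)) (Fin (n - k)) ℝ) (hΔ : Δ.PosDef)
    (hΩrep : Ω = X * Γ * Xᵀ + Z * Δ * Zᵀ) :
    K₁ * Xᵀ * (Ω + X * K₁ * Xᵀ)⁻¹ = K₂ * Xᵀ * (1 + X * K₂ * Xᵀ)⁻¹ := by
  have hZX : Zᵀ * X = 0 := by
    have := congrArg Matrix.transpose hXZ
    simpa using this
  have hXXpd : (Xᵀ * X).PosDef := aux_posDef_transpose_mul_self X hX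
  have hXXu : IsUnit (Xᵀ * X).det := isUnit_iff_ne_zero.mpr hXXpd.det_pos.ne'
  have hΓu : IsUnit Γ.det := isUnit_iff_ne_zero.mpr hΓ.det_pos.ne'
  have hΩu : IsUnit Ω.det := isUnit_iff_ne_zero.mpr hΩ.det_pos.ne'
  have h1ρ : (0:ℝ) < 1 + ρ := by linarith
  -- Ω⁻¹ * X
  have hΩX : Ω * (X * ((Xᵀ * X)⁻¹ * Γ⁻¹)) = X := by
    rw [hΩrep]; exact aux_key X Z hZX Γ Δ hΓu hXXu
  have hΩinvX : Ω⁻¹ * X = X * ((Xᵀ * X)⁻¹ * Γ⁻¹) := by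
    conv_lhs => rw [← hΩX, ← Matrix.mul_assoc, Matrix.nonsing_inv_mul _ hΩu, Matrix.one_mul]
  -- Xᵀ Ω⁻¹ X = Γ⁻¹, hence K₁ = ρ • Γ
  have hXΩX : Xᵀ * Ω⁻¹ * X = Γ⁻¹ := by
    rw [Matrix.mul_assoc, hΩinvX, ← Matrix.mul_assoc Xᵀ X, ← Matrix.mul_assoc (Xᵀ * X),
      Matrix.mul_nonsing_inv _ hXXu, Matrix.one_mul]
  have hK₁Γ : K₁ = ρ • Γ := by
    rw [hK₁, hXΩX, Matrix.nonsing_inv_nonsing_inv _ hΓu]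
  -- the matrix A = Ω + X K₁ Xᵀ
  set G : Matrix (Fin k) (Fin k) ℝ := (1 + ρ) • Γ with hGdef
  have hGu : IsUnit G.det := by
    rw [hGdef, Matrix.det_smul]
    exact (isUnit_iff_ne_zero.mpr (by positivity)).mul hΓu
  have hGinv : G⁻¹ = (1 + ρ)⁻¹ • Γ⁻¹ := by
    apply Matrix.inv_eq_left_inv
    rw [hGdef, Matrix.smul_mul, Matrix.mul_smul, smul_smul,
      inv_mul_cancel₀ h1ρ.ne', Matrix.nonsing_inv_mul _ hΓu, one_smul]
  have hArep : Ω + X * K₁ * Xᵀ = X * G * Xᵀ + Z * Δ * Zᵀ := by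
    rw [hΩrep, hK₁Γ, hGdef, add_smul, one_smul, Matrix.mul_add, Matrix.add_mul]
    abel
  set A : Matrix (Fin n) (Fin n) ℝ := Ω + X * K₁ * Xᵀ with hAdef
  have hApd : A.PosDef := by
    rw [hAdef, hK₁Γ]
    refine hΩ.add_posSemidef ?_
    have h1 : ((ρ : ℝ) • Γ).PosSemidef := aux_smul_posSemidef hΓ.posSemidef hρ.le
    have := h1.mul_mul_conjTranspose_same X
    simpa using this
  have hAu : IsUnit A.det := isUnit_iff_ne_zero.mpr hApd.det_pos.ne'
  have hAX : A * (X * ((Xᵀ * X)⁻¹ * G⁻¹)) = X := by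
    rw [hArep]; exact aux_key X Z hZX G Δ hGu hXXu
  have hAinvX : A⁻¹ * X = X * ((Xᵀ * X)⁻¹ * G⁻¹) := by
    conv_lhs => rw [← hAX, ← Matrix.mul_assoc, Matrix.nonsing_inv_mul _ hAu, Matrix.one_mul]
  -- symmetry facts
  have hAsymm : Aᵀ = A := by
    have := hApd.isHermitian
    simpa [Matrix.IsHermitian] using this
  have hXXs : (Xᵀ * X)ᵀ = Xᵀ * X := by simp [Matrix.transpose_mul]
  have hΓs : Γᵀ = Γ := by simpa [Matrix.IsHermitian] using hΓ.isHermitian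
  have hXAinv : Xᵀ * A⁻¹ = ((Xᵀ * X)⁻¹ * G⁻¹)ᵀ * Xᵀ := by
    have := congrArg Matrix.transpose hAinvX
    rw [Matrix.transpose_mul, Matrix.transpose_mul, Matrix.transpose_nonsing_inv,
      hAsymm] at this
    exact this
  have hGinvT : (G⁻¹)ᵀ = G⁻¹ := by
    rw [Matrix.transpose_nonsing_inv]
    congr 1
    rw [hGdef, Matrix.transpose_smul, hΓs]
  have hXXinvT : ((Xᵀ * X)⁻¹)ᵀ = (Xᵀ * X)⁻¹ := by
    rw [Matrix.transpose_nonsing_inv, hXXs]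
  -- LHS computation
  have hLHS : K₁ * Xᵀ * A⁻¹ = (ρ * (1 + ρ)⁻¹) • ((Xᵀ * X)⁻¹ * Xᵀ) := by
    rw [Matrix.mul_assoc, hXAinv, Matrix.transpose_mul, hGinvT, hXXinvT, hK₁Γ, hGinv]
    rw [Matrix.smul_mul, Matrix.smul_mul, Matrix.smul_mul, Matrix.mul_smul, smul_smul]
    congr 1
    rw [← Matrix.mul_assoc, ← Matrix.mul_assoc, Matrix.mul_nonsing_inv _ hΓu,
      Matrix.one_mul]
  -- RHS: B = 1 + X K₂ Xᵀ
  set B : Matrix (Fin n) (Fin n) ℝ := 1 + X * K₂ * Xᵀ with hBdef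
  have hBpd : B.PosDef := by
    rw [hBdef, hK₂]
    refine Matrix.PosDef.add_posSemidef Matrix.PosDef.one ?_
    have h1 : ((ρ : ℝ) • (Xᵀ * X)⁻¹).PosSemidef := aux_smul_posSemidef hXXpd.inv.posSemidef hρ.le
    have := h1.mul_mul_conjTranspose_same X
    simpa using this
  have hBu : IsUnit B.det := isUnit_iff_ne_zero.mpr hBpd.det_pos.ne'
  have hthis : X * (ρ • (Xᵀ * X)⁻¹) * Xᵀ * X = ρ • X := by
    rw [Matrix.mul_smul, Matrix.smul_mul, Matrix.smul_mul,
      Matrix.mul_assoc (X * (Xᵀ * X)⁻¹) Xᵀ X, Matrix.mul_assoc X (Xᵀ * X)⁻¹ (Xᵀ * X),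
      Matrix.nonsing_inv_mul _ hXXu, Matrix.mul_one]
  have hBXfull : B * X = (1 + ρ) • X := by
    rw [hBdef, Matrix.add_mul, Matrix.one_mul, hK₂, hthis, add_smul, one_smul]
  have hBX : B * ((1 + ρ)⁻¹ • X) = X := by
    rw [Matrix.mul_smul, hBXfull, smul_smul, inv_mul_cancel₀ h1ρ.ne', one_smul]
  have hBinvX : B⁻¹ * X = (1 + ρ)⁻¹ • X := by
    conv_lhs => rw [← hBX, ← Matrix.mul_assoc, Matrix.nonsing_inv_mul _ hBu, Matrix.one_mul]
  have hBsymm : Bᵀ = B := by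
    simpa [Matrix.IsHermitian] using hBpd.isHermitian
  have hXBinv : Xᵀ * B⁻¹ = (1 + ρ)⁻¹ • Xᵀ := by
    have := congrArg Matrix.transpose hBinvX
    rw [Matrix.transpose_mul, Matrix.transpose_nonsing_inv, hBsymm,
      Matrix.transpose_smul] at this
    exact this
  have hRHS : K₂ * Xᵀ * B⁻¹ = (ρ * (1 + ρ)⁻¹) • ((Xᵀ * X)⁻¹ * Xᵀ) := by
    rw [Matrix.mul_assoc, hXBinv, hK₂, Matrix.mul_smul, Matrix.smul_mul, smul_smul,
      mul_comm ((1+ρ)⁻¹)]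
  rw [hLHS, hRHS]
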